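/- Fix a real number N > 1 and D' > 0, let h be a probability CD(0,N) density on [0,D'], and let w ∈ (0,1). Then N·(1 − w)·r_h(w)^{N−1} ≤ D'^N·h(r_h(w)). -/

import Mathlib

open MeasureTheory

noncomputable section

/-- A `CD(0,N)` density on `[0, D']`: nonnegative on `[0, D']`, positive on `(0, D')`,
and `h^{1/(N-1)}` is concave on `[0, D']`. -/
def IsCDDensity (N D' : ℝ) (h : ℝ → ℝ) : Prop :=
  (∀ x ∈ Set.Icc (0:ℝ) D', 0 ≤ h x) ∧
  (∀ x ∈ Set.Ioo (0:ℝ) D', 0 < h x) ∧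
  ConcaveOn ℝ (Set.Icc (0:ℝ) D') (fun x => h x ^ (1 / (N - 1)))

/-- A probability `CD(0,N)` density on `[0, D']`. -/
def IsProbCDDensity (N D' : ℝ) (h : ℝ → ℝ) : Prop :=
  IsCDDensity N D' h ∧ (∫ x in Set.Icc (0:ℝ) D', h x) = 1

/-- Bishop–Gromov-type estimate (Part 1 of Proposition 5.4): for a probability `CD(0,N)`
density `h` on `[0, D']` and `w ∈ (0,1)`, one has
`N (1 - w) r_h(w)^{N-1} ≤ D'^N h(r_h(w))`, where `r = r_h(w)` is characterized by
`r ∈ (0, D')` and `∫_0^r h = w`. -/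
theorem radius_upper_estimate (N D' : ℝ) (hN : 1 < N) (hD' : 0 < D')
    (h : ℝ → ℝ) (hh : IsProbCDDensity N D' h)
    (w : ℝ) (hw : w ∈ Set.Ioo (0:ℝ) 1) :
    ∀ r ∈ Set.Ioo (0:ℝ) D', (∫ x in (0:ℝ)..r, h x) = w →
      N * (1 - w) * r ^ (N - 1) ≤ D' ^ N * h r := by
  intro r hr hir
  obtain ⟨⟨hnn, hpos, hconc⟩, hint1⟩ := hh
  obtain ⟨hr0, hrD⟩ := hr
  have hN1 : (0:ℝ) < N - 1 := by linarith
  -- integrability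
  have hInt : IntegrableOn h (Set.Icc (0:ℝ) D') := by
    by_contra hc
    rw [MeasureTheory.integral_undef hc] at hint1
    norm_num at hint1
  have hIntI : IntervalIntegrable h volume 0 D' := by
    rw [intervalIntegrable_iff_integrableOn_Icc_of_le hD'.le]
    exact hInt
  have hIntr : IntervalIntegrable h volume r D' := by
    apply hIntI.mono_set
    rw [Set.uIcc_of_le hrD.le, Set.uIcc_of_le hD'.le]
    exact Set.Icc_subset_Icc hr0.le le_rfl
  have hInt0r : IntervalIntegrable h volume 0 r := by
    apply hIntI.mono_set
    rw [Set.uIcc_of_le hr0.le, Set.uIcc_of_le hD'.le]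
    exact Set.Icc_subset_Icc le_rfl hrD.le
  -- tail mass
  have htail : (∫ x in r..D', h x) = 1 - w := by
    have hsplit : (∫ x in (0:ℝ)..r, h x) + (∫ x in r..D', h x) = ∫ x in (0:ℝ)..D', h x :=
      intervalIntegral.integral_add_adjacent_intervals hInt0r hIntr
    have h1 : (∫ x in (0:ℝ)..D', h x) = 1 := by
      rw [intervalIntegral.integral_of_le hD'.le, ← hint1,
        MeasureTheory.integral_Icc_eq_integral_Ioc]
    rw [hir, h1] at hsplit
    linarith
  -- pointwise bound on [r, D']
  have hhr0 : 0 ≤ h r := hnn r ⟨hr0.le, hrD.le.trans le_rfl⟩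
  have hptwise : ∀ x ∈ Set.Icc r D', h x ≤ x ^ (N-1) / r ^ (N-1) * h r := by
    intro x ⟨hxr, hxD⟩
    have hx0 : 0 < x := lt_of_lt_of_le hr0 hxr
    set f : ℝ → ℝ := fun x => h x ^ (1 / (N - 1)) with hf
    have hxmem : x ∈ Set.Icc (0:ℝ) D' := ⟨hx0.le, hxD⟩
    have h0mem : (0:ℝ) ∈ Set.Icc (0:ℝ) D' := ⟨le_rfl, hD'.le⟩
    have hfx0 : 0 ≤ f x := Real.rpow_nonneg (hnn x hxmem) _
    have hf00 : 0 ≤ f 0 := Real.rpow_nonneg (hnn 0 h0mem) _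
    have ha : 0 ≤ 1 - r / x := by
      rw [sub_nonneg, div_le_one hx0]; exact hxr
    have hb : 0 ≤ r / x := by positivity
    have hcomb := hconc.2 h0mem hxmem ha hb (by ring)
    have hrx : (1 - r / x) • (0:ℝ) + (r / x) • x = r := by
      rw [smul_eq_mul, smul_eq_mul, mul_zero, zero_add, div_mul_cancel₀ r hx0.ne']
    rw [hrx] at hcomb
    -- f r ≥ (r/x) f x
    have hkey : (r / x) * f x ≤ f r := by
      have h1 : (0:ℝ) ≤ (1 - r / x) * f 0 := by positivity
      simp only [smul_eq_mul] at hcomb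
      linarith
    -- hence f x ≤ (x/r) * f r
    have hkey2 : f x ≤ (x / r) * f r := by
      rw [div_mul_eq_mul_div, le_div_iff₀ hr0]
      calc f x * r = (r / x) * f x * x := by field_simp
        _ ≤ f r * x := mul_le_mul_of_nonneg_right hkey hx0.le
        _ = x * f r := mul_comm _ _
    -- raise to power N - 1
    have hhx : h x = f x ^ (N - 1) := by
      show h x = (h x ^ (1 / (N - 1))) ^ (N - 1)
      rw [← Real.rpow_mul (hnn x hxmem), one_div, inv_mul_cancel₀ (ne_of_gt hN1),
        Real.rpow_one]
    have hhr : h r = f r ^ (N - 1) := by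
      show h r = (h r ^ (1 / (N - 1))) ^ (N - 1)
      rw [← Real.rpow_mul hhr0, one_div, inv_mul_cancel₀ (ne_of_gt hN1), Real.rpow_one]
    have hfr0 : 0 ≤ f r := Real.rpow_nonneg hhr0 _
    calc h x = f x ^ (N - 1) := hhx
      _ ≤ ((x / r) * f r) ^ (N - 1) :=
        Real.rpow_le_rpow hfx0 hkey2 hN1.le
      _ = (x / r) ^ (N - 1) * f r ^ (N - 1) :=
        Real.mul_rpow (by positivity) hfr0
      _ = x ^ (N-1) / r ^ (N-1) * h r := by
        rw [Real.div_rpow hx0.le hr0.le, hhr]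
  -- integrate the bound
  have hgInt : IntervalIntegrable (fun x => x ^ (N-1) / r ^ (N-1) * h r) volume r D' := by
    apply IntervalIntegrable.mul_const
    apply IntervalIntegrable.div_const
    exact intervalIntegral.intervalIntegrable_rpow (Or.inl (by linarith))
  have hcmp : (1 - w) ≤ ∫ x in r..D', x ^ (N-1) / r ^ (N-1) * h r := by
    rw [← htail]
    exact intervalIntegral.integral_mono_on hrD.le hIntr hgInt hptwise
  have hval : (∫ x in r..D', x ^ (N-1) / r ^ (N-1) * h r)
      = (D' ^ N - r ^ N) / N / r ^ (N-1) * h r := by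
    rw [intervalIntegral.integral_mul_const, intervalIntegral.integral_div,
      integral_rpow (Or.inl (by linarith))]
    norm_num
  rw [hval] at hcmp
  -- final arithmetic
  have hrpow : (0:ℝ) < r ^ (N-1) := Real.rpow_pos_of_pos hr0 _
  have hrN : (0:ℝ) ≤ r ^ N := Real.rpow_nonneg hr0.le _
  have hNpos : (0:ℝ) < N := by linarith
  rw [div_div, div_mul_eq_mul_div, le_div_iff₀ (by positivity)] at hcmp
  nlinarith [mul_nonneg hhr0 hrN]
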